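/- Let n ≥ 2 be an integer, let I ⊆ ℝ be an interval, let A, B : ℝ → ℝ with B differentiable, and let r : I → ℝ be a differentiable function with r(θ) > 0 and 1 + B(θ)r(θ)^{n−1} > 0 for all θ ∈ I, satisfying r'(θ) = A(θ)r(θ)^n / (1 + B(θ)r(θ)^{n−1}). Define γ : I → ℝ by γ(θ) = r(θ)^{n−1} / (1 + B(θ)r(θ)^{n−1}). Then γ is differentiable and satisfies the Abel equation γ'(θ) = −(n−1)A(θ)B(θ)γ(θ)^3 + [(n−1)A(θ) − B'(θ)]γ(θ)^2 for all θ ∈ I. -/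

import Mathlib

/-- Cherkas transformation: Let `n ≥ 2`, let `I` be an interval, let `B` be
differentiable with derivative `B'`, and let `r` be a positive solution of
`r' = A r^n / (1 + B r^(n-1))` on `I` with `1 + B θ r θ^(n-1) > 0`. Then
`γ = r^(n-1) / (1 + B r^(n-1))` satisfies the Abel equation
`γ' = -(n-1) A B γ³ + ((n-1) A - B') γ²` on `I`. -/
theorem cherkas_transformation
    (n : ℕ) (hn : 2 ≤ n) (I : Set ℝ) (hI : I.OrdConnected)
    (A B B' : ℝ → ℝ) (hB : ∀ θ : ℝ, HasDerivAt B (B' θ) θ)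
    (r : ℝ → ℝ)
    (hrpos : ∀ θ ∈ I, 0 < r θ)
    (hden : ∀ θ ∈ I, 0 < 1 + B θ * r θ ^ (n - 1))
    (hr : ∀ θ ∈ I, HasDerivWithinAt r
      (A θ * r θ ^ n / (1 + B θ * r θ ^ (n - 1))) I θ) :
    ∀ θ ∈ I, HasDerivWithinAt
      (fun θ => r θ ^ (n - 1) / (1 + B θ * r θ ^ (n - 1)))
      (-((n : ℝ) - 1) * A θ * B θ * (r θ ^ (n - 1) / (1 + B θ * r θ ^ (n - 1))) ^ 3 +
        (((n : ℝ) - 1) * A θ - B' θ) * (r θ ^ (n - 1) / (1 + B θ * r θ ^ (n - 1))) ^ 2)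
      I θ := by
  intro θ hθ
  obtain ⟨k, rfl⟩ : ∃ k, n = k + 2 := ⟨n - 2, by omega⟩
  have h1 : k + 2 - 1 = k + 1 := rfl
  have hDpos := hden θ hθ
  have hDne : (1 + B θ * r θ ^ (k + 2 - 1)) ≠ 0 := ne_of_gt hDpos
  have hrθ := hr θ hθ
  have hu : HasDerivWithinAt (fun t => r t ^ (k + 2 - 1))
      ((((k + 1 : ℕ)) : ℝ) * r θ ^ k *
        (A θ * r θ ^ (k + 2) / (1 + B θ * r θ ^ (k + 2 - 1)))) I θ := by
    simpa [h1] using hrθ.fun_pow (k + 1)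
  have hD : HasDerivWithinAt (fun t => 1 + B t * r t ^ (k + 2 - 1))
      (B' θ * r θ ^ (k + 2 - 1) + B θ *
        ((((k + 1 : ℕ)) : ℝ) * r θ ^ k *
          (A θ * r θ ^ (k + 2) / (1 + B θ * r θ ^ (k + 2 - 1))))) I θ :=
    (((hB θ).hasDerivWithinAt.mul hu)).const_add 1
  have key := hu.fun_div hD hDne
  refine key.congr_deriv ?_
  rw [h1] at hDne ⊢
  field_simp
  push_cast
  ring
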